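/- Let E_1,…,E_K be independent random variables on a probability space, with E_k exponentially distributed with rate y_k for each k. Then for every real t ≥ 0, the probability that there exists an item i ∈ {1,…,q} with (y_k/u_{k,i})·E_k ≥ t for every k with u_{k,i} > 0 is at most q·e^{-t}. -/

import Mathlib

open MeasureTheory ProbabilityTheory Real Set

lemma expMeasure_Ici {r x : ℝ} (hr : 0 < r) (hx : 0 ≤ x) :
    expMeasure r (Set.Ici x) = ENNReal.ofReal (Real.exp (-(r * x))) := by
  have hP : IsProbabilityMeasure (expMeasure r) := isProbabilityMeasure_expMeasure hr
  have hIic : expMeasure r (Set.Iic x) = ENNReal.ofReal (1 - Real.exp (-(r * x))) := by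
    rw [expMeasure, gammaMeasure, withDensity_apply _ measurableSet_Iic]
    have h := lintegral_exponentialPDF_eq_antiDeriv hr x
    rw [if_pos hx] at h
    simpa [exponentialPDF, exponentialPDFReal, gammaPDF] using h
  have hsing : expMeasure r {x} = 0 := by
    rw [expMeasure, gammaMeasure, withDensity_apply _ (measurableSet_singleton x)]
    exact setLIntegral_measure_zero _ _ (measure_singleton x)
  have hIio : expMeasure r (Set.Iio x) = ENNReal.ofReal (1 - Real.exp (-(r * x))) := by
    have h1 : expMeasure r (Set.Iic x) ≤ expMeasure r (Set.Iio x) := by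
      calc expMeasure r (Set.Iic x) ≤ expMeasure r (Set.Iio x ∪ {x}) := by
            apply measure_mono; intro z hz
            have hz2 : z ≤ x := hz
            rcases lt_or_eq_of_le hz2 with h | h
            · exact Or.inl h
            · exact Or.inr h
        _ ≤ expMeasure r (Set.Iio x) + expMeasure r {x} := measure_union_le _ _
        _ = expMeasure r (Set.Iio x) := by rw [hsing, add_zero]
    exact le_antisymm (le_trans (measure_mono Set.Iio_subset_Iic_self) hIic.le)
      (hIic ▸ h1)
  have hcompl : Set.Ici x = (Set.Iio x)ᶜ := by simp
  rw [hcompl, measure_compl measurableSet_Iio (measure_ne_top _ _), measure_univ, hIio]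
  have he1 : Real.exp (-(r * x)) ≤ 1 := Real.exp_le_one_iff.mpr (neg_nonpos.mpr (mul_nonneg hr.le hx))
  rw [ENNReal.sub_eq_of_eq_add (by simp)]
  rw [← ENNReal.ofReal_add (by linarith [Real.exp_pos (-(r*x))]) (by linarith)]
  norm_num

theorem stmt_1
    {Ω : Type*} [MeasurableSpace Ω] {μ : Measure Ω} [IsProbabilityMeasure μ]
    (q K : ℕ) (hq : 0 < q) (hK : 0 < K)
    (u : Fin K → Fin q → ℝ) (hu_nonneg : ∀ k i, 0 ≤ u k i)
    (hu_sum : ∀ i, ∑ k, u k i = 1)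
    (y : Fin K → ℝ)
    (hy : ∀ k, y k = Finset.univ.sup' (Finset.univ_nonempty_iff.mpr ⟨⟨0, hq⟩⟩) (u k))
    (hy_pos : ∀ k, 0 < y k)
    (E : Fin K → Ω → ℝ) (hmeas : ∀ k, Measurable (E k))
    (hindep : iIndepFun E μ)
    (hlaw : ∀ k, μ.map (E k) = expMeasure (y k))
    (t : ℝ) (ht : 0 ≤ t) :
    μ {ω | ∃ i, ∀ k, 0 < u k i → t ≤ (y k / u k i) * E k ω}
      ≤ ENNReal.ofReal (q * Real.exp (-t)) := by
  -- per-item bound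
  have key : ∀ i : Fin q,
      μ {ω | ∀ k, 0 < u k i → t ≤ (y k / u k i) * E k ω} ≤ ENNReal.ofReal (Real.exp (-t)) := by
    intro i
    set B : Fin K → Set ℝ := fun k =>
      if 0 < u k i then Set.Ici (t * u k i / y k) else Set.univ with hB
    have hBmeas : ∀ k, MeasurableSet (B k) := by
      intro k; rw [hB]; dsimp only
      split_ifs <;> [exact measurableSet_Ici; exact MeasurableSet.univ]
    have hSet : {ω | ∀ k, 0 < u k i → t ≤ (y k / u k i) * E k ω} = ⋂ k, E k ⁻¹' B k := by
      ext ω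
      simp only [Set.mem_setOf_eq, Set.mem_iInter, Set.mem_preimage, hB]
      refine forall_congr' fun k => ?_
      by_cases hk : 0 < u k i
      · constructor
        · intro h
          have h2 := h hk
          rw [if_pos hk, Set.mem_Ici, div_le_iff₀ (hy_pos k)]
          rw [div_mul_eq_mul_div, le_div_iff₀ hk] at h2
          nlinarith
        · intro h _
          rw [if_pos hk, Set.mem_Ici, div_le_iff₀ (hy_pos k)] at h
          rw [div_mul_eq_mul_div, le_div_iff₀ hk]
          nlinarith
      · simp [hk]
    have hprod : μ (⋂ k, E k ⁻¹' B k) = ∏ k, μ (E k ⁻¹' B k) := by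
      have := hindep.measure_inter_preimage_eq_mul Finset.univ
        (sets := B) (fun k _ => hBmeas k)
      simpa using this
    have hfac : ∀ k, μ (E k ⁻¹' B k) = ENNReal.ofReal (Real.exp (-(t * u k i))) := by
      intro k
      have hmap : μ (E k ⁻¹' B k) = (μ.map (E k)) (B k) := by
        rw [Measure.map_apply (hmeas k) (hBmeas k)]
      rw [hmap, hlaw k, hB]
      dsimp only
      by_cases hk : 0 < u k i
      · rw [if_pos hk]
        rw [expMeasure_Ici (hy_pos k) (div_nonneg (mul_nonneg ht (hu_nonneg k i)) (hy_pos k).le)]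
        congr 1
        rw [mul_div_assoc', mul_comm (y k), mul_div_assoc, div_self (hy_pos k).ne']
        ring_nf
      · have hk0 : u k i = 0 := le_antisymm (not_lt.mp hk) (hu_nonneg k i)
        rw [if_neg hk]
        have : IsProbabilityMeasure (expMeasure (y k)) :=
          isProbabilityMeasure_expMeasure (hy_pos k)
        simp [hk0]
    calc μ {ω | ∀ k, 0 < u k i → t ≤ (y k / u k i) * E k ω}
        = ∏ k, μ (E k ⁻¹' B k) := by rw [hSet, hprod]
      _ = ∏ k, ENNReal.ofReal (Real.exp (-(t * u k i))) := by
          exact Finset.prod_congr rfl fun k _ => hfac k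
      _ = ENNReal.ofReal (∏ k, Real.exp (-(t * u k i))) := by
          rw [ENNReal.ofReal_prod_of_nonneg fun k _ => (Real.exp_pos _).le]
      _ = ENNReal.ofReal (Real.exp (-t)) := by
          rw [← Real.exp_sum]
          congr 1
          rw [Finset.sum_neg_distrib, ← Finset.mul_sum, hu_sum i, mul_one]
      _ ≤ ENNReal.ofReal (Real.exp (-t)) := le_rfl
  -- union bound
  have hUnion : {ω | ∃ i, ∀ k, 0 < u k i → t ≤ (y k / u k i) * E k ω}
      = ⋃ i, {ω | ∀ k, 0 < u k i → t ≤ (y k / u k i) * E k ω} := by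
    ext ω; simp [Set.mem_iUnion]
  calc μ {ω | ∃ i, ∀ k, 0 < u k i → t ≤ (y k / u k i) * E k ω}
      ≤ ∑ i : Fin q, μ {ω | ∀ k, 0 < u k i → t ≤ (y k / u k i) * E k ω} := by
        rw [hUnion]; exact measure_iUnion_fintype_le _ _
    _ ≤ ∑ _i : Fin q, ENNReal.ofReal (Real.exp (-t)) := Finset.sum_le_sum fun i _ => key i
    _ = q * ENNReal.ofReal (Real.exp (-t)) := by
        rw [Finset.sum_const, Finset.card_univ, Fintype.card_fin, nsmul_eq_mul]
    _ = ENNReal.ofReal (q * Real.exp (-t)) := by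
        rw [ENNReal.ofReal_mul (by positivity), ENNReal.ofReal_natCast]
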